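/- Let Q be a semimedial left quasigroup and α a congruence. Then Dis_α (the normal closure in LMlt(Q) of {L_a L_b^{-1} : a α b}) equals the subgroup generated by {L_a^{-1} L_b : a α b}. -/

import Mathlib

/-- The left multiplication group of a left quasigroup. -/
def LMlt {Q : Type*} (L : Q → Equiv.Perm Q) : Subgroup (Equiv.Perm Q) :=
  Subgroup.closure (Set.range L)

/-- The relative displacement group Dis_r : the normal closure in LMlt(Q) of
{L_a L_b⁻¹ : r a b}. -/
def disRel {Q : Type*} (L : Q → Equiv.Perm Q) (r : Q → Q → Prop) :
    Subgroup (Equiv.Perm Q) :=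
  Subgroup.closure
    {x : Equiv.Perm Q | ∃ g ∈ LMlt L, ∃ a b : Q, r a b ∧ x = g * (L a * (L b)⁻¹) * g⁻¹}

/-- For a semimedial left quasigroup and a congruence α,
Dis_α = ⟨L_a⁻¹ L_b : a α b⟩. -/
theorem stmt_12 {Q : Type*} (mul ld : Q → Q → Q)
    (h1 : ∀ x y, mul x (ld x y) = y) (h2 : ∀ x y, ld x (mul x y) = y)
    (hsm : ∀ x y z, mul (mul x x) (mul y z) = mul (mul x y) (mul x z))
    (L : Q → Equiv.Perm Q) (hL : ∀ a b : Q, L a b = mul a b)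
    (r : Q → Q → Prop) (hequiv : Equivalence r)
    (hcong : ∀ a b c d, r a c → r b d → r (mul a b) (mul c d) ∧ r (ld a b) (ld c d)) :
    disRel L r =
      Subgroup.closure {x : Equiv.Perm Q | ∃ a b : Q, r a b ∧ x = (L a)⁻¹ * L b} := by
  set S : Set (Equiv.Perm Q) := {x | ∃ a b : Q, r a b ∧ x = (L a)⁻¹ * L b} with hSdef
  set D := Subgroup.closure S with hDdef
  -- semimediality as permutations
  have key : ∀ x y : Q, L (mul x x) * L y = L (mul x y) * L x := by
    intro x y
    ext z
    simp only [Equiv.Perm.coe_mul, Function.comp_apply, hL]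
    exact hsm x y z
  have key2 : ∀ x y : Q, L y * (L x)⁻¹ = (L (mul x x))⁻¹ * L (mul x y) := by
    intro x y
    calc L y * (L x)⁻¹
        = (L (mul x x))⁻¹ * (L (mul x x) * L y) * (L x)⁻¹ := by group
      _ = (L (mul x x))⁻¹ * (L (mul x y) * L x) * (L x)⁻¹ := by rw [key x y]
      _ = (L (mul x x))⁻¹ * L (mul x y) := by group
  have conj : ∀ x a b : Q,
      L x * ((L a)⁻¹ * L b) * (L x)⁻¹ = (L (mul x a))⁻¹ * L (mul x b) := by
    intro x a b
    calc L x * ((L a)⁻¹ * L b) * (L x)⁻¹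
        = (L a * (L x)⁻¹)⁻¹ * (L b * (L x)⁻¹) := by group
      _ = ((L (mul x x))⁻¹ * L (mul x a))⁻¹ * ((L (mul x x))⁻¹ * L (mul x b)) := by
          rw [key2 x a, key2 x b]
      _ = (L (mul x a))⁻¹ * L (mul x b) := by group
  -- D is stable under conjugation by each L x
  have Dconj : ∀ (x : Q), ∀ n ∈ D, L x * n * (L x)⁻¹ ∈ D := by
    intro x n hn
    induction hn using Subgroup.closure_induction with
    | mem y hy =>
        obtain ⟨a, b, hab, rfl⟩ := hy
        rw [conj x a b]
        exact Subgroup.subset_closure ⟨mul x a, mul x b,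
          (hcong x a x b (hequiv.refl x) hab).1, rfl⟩
    | one => simpa using Subgroup.one_mem D
    | mul y z hy hz py pz =>
        have : L x * (y * z) * (L x)⁻¹ = (L x * y * (L x)⁻¹) * (L x * z * (L x)⁻¹) := by
          group
        rw [this]; exact Subgroup.mul_mem D py pz
    | inv y hy py =>
        have : L x * y⁻¹ * (L x)⁻¹ = (L x * y * (L x)⁻¹)⁻¹ := by group
        rw [this]; exact Subgroup.inv_mem D py
  -- D is stable under conjugation by each (L x)⁻¹
  have Dconj2 : ∀ (x : Q), ∀ n ∈ D, (L x)⁻¹ * n * L x ∈ D := by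
    intro x n hn
    induction hn using Subgroup.closure_induction with
    | mem y hy =>
        obtain ⟨a, b, hab, rfl⟩ := hy
        have hc := conj x (ld x a) (ld x b)
        rw [h1 x a, h1 x b] at hc
        have : (L x)⁻¹ * ((L a)⁻¹ * L b) * L x = (L (ld x a))⁻¹ * L (ld x b) := by
          rw [← hc]; group
        rw [this]
        exact Subgroup.subset_closure ⟨ld x a, ld x b,
          (hcong x a x b (hequiv.refl x) hab).2, rfl⟩
    | one => simpa using Subgroup.one_mem D
    | mul y z hy hz py pz =>
        have : (L x)⁻¹ * (y * z) * L x = ((L x)⁻¹ * y * L x) * ((L x)⁻¹ * z * L x) := by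
          group
        rw [this]; exact Subgroup.mul_mem D py pz
    | inv y hy py =>
        have : (L x)⁻¹ * y⁻¹ * L x = ((L x)⁻¹ * y * L x)⁻¹ := by group
        rw [this]; exact Subgroup.inv_mem D py
  -- LMlt is contained in the normalizer of D
  have hnorm : LMlt L ≤ Subgroup.normalizer (D : Set (Equiv.Perm Q)) := by
    rw [LMlt]
    refine (Subgroup.closure_le _).mpr ?_
    rintro _ ⟨x, rfl⟩
    rw [SetLike.mem_coe, Subgroup.mem_normalizer_iff]
    intro n
    constructor
    · intro hn; exact Dconj x n hn
    · intro hn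
      have h' := Dconj2 x _ hn
      have e : (L x)⁻¹ * (L x * n * (L x)⁻¹) * L x = n := by group
      rwa [e] at h'
  apply le_antisymm
  · rw [disRel]
    refine (Subgroup.closure_le _).mpr ?_
    rintro _ ⟨g, hg, a, b, hab, rfl⟩
    have base : L a * (L b)⁻¹ ∈ D := by
      rw [key2 b a]
      exact Subgroup.subset_closure ⟨mul b b, mul b a,
        (hcong b b b a (hequiv.refl b) (hequiv.symm hab)).1, rfl⟩
    exact ((Subgroup.mem_normalizer_iff.mp (hnorm hg)) _).mp base
  · refine (Subgroup.closure_le _).mpr ?_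
    rintro _ ⟨a, b, hab, rfl⟩
    apply Subgroup.subset_closure
    refine ⟨(L a)⁻¹, Subgroup.inv_mem _ (Subgroup.subset_closure ⟨a, rfl⟩),
      b, a, hequiv.symm hab, ?_⟩
    group
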